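/- Consider two data samples x_1 (label +1) and x_2 (label -1) in R^d with 0 < x_1ᵀx_2 ≤ (1/2)‖x_2‖². Suppose at iterate w_t we have w_tᵀx_1 > 0 and w_tᵀx_2 > 0, and w_{t+1} = w_t + η exp(-w_tᵀx_1)x_1 - η exp(w_tᵀx_2)x_2 (the gradient step on L(w) = exp(-wᵀx_1) + exp(wᵀx_2)). Then w_{t+1}ᵀx_2 - w_tᵀx_2 ≤ -0.5 η ‖x_2‖². Consequently the sequence {w_tᵀx_2} decreases by at least a constant per step while both samples are activated, so within finitely many steps w_tᵀx_2 ≤ 0. -/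

import Mathlib

open Filter Finset Real

/-- one GD step on `L(w) = exp(-wᵀx₁) + exp(wᵀx₂)` with both samples
activated decreases `wᵀx₂` by at least `0.5 η ‖x₂‖²`, provided
`0 < x₁ᵀx₂ ≤ 0.5 ‖x₂‖²`. -/
theorem gd_step_decreases_negative_sample_margin
    {d : ℕ} (x₁ x₂ w wnext : EuclideanSpace ℝ (Fin d)) (η : ℝ)
    (hη : 0 < η)
    (h12pos : 0 < (inner ℝ x₁ x₂ : ℝ))
    (h12le : (inner ℝ x₁ x₂ : ℝ) ≤ (1 / 2) * ‖x₂‖ ^ 2)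
    (hw1 : 0 < (inner ℝ w x₁ : ℝ))
    (hw2 : 0 < (inner ℝ w x₂ : ℝ))
    (hupd : wnext = w + (η * Real.exp (-(inner ℝ w x₁ : ℝ))) • x₁
      - (η * Real.exp ((inner ℝ w x₂ : ℝ))) • x₂) :
    (inner ℝ wnext x₂ : ℝ) - (inner ℝ w x₂ : ℝ) ≤ -(0.5 * η * ‖x₂‖ ^ 2) := by
  subst hupd
  rw [inner_sub_left, inner_add_left, real_inner_smul_left, real_inner_smul_left,
    real_inner_self_eq_norm_sq]
  have he1 : Real.exp (-(inner ℝ w x₁ : ℝ)) ≤ 1 := by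
    rw [Real.exp_le_one_iff]; linarith
  have he2 : (1 : ℝ) ≤ Real.exp ((inner ℝ w x₂ : ℝ)) := by
    rw [Real.one_le_exp_iff]; linarith
  have h1 : η * Real.exp (-(inner ℝ w x₁ : ℝ)) * (inner ℝ x₁ x₂ : ℝ) ≤ η * (inner ℝ x₁ x₂ : ℝ) :=
    mul_le_mul_of_nonneg_right
      (by nlinarith [Real.exp_pos (-(inner ℝ w x₁ : ℝ))]) h12pos.le
  have h2 : η * ‖x₂‖ ^ 2 ≤ η * Real.exp ((inner ℝ w x₂ : ℝ)) * ‖x₂‖ ^ 2 := by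
    nlinarith [mul_nonneg (mul_nonneg hη.le (sq_nonneg ‖x₂‖)) (sub_nonneg.mpr he2)]
  nlinarith
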